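/- arXiv:2206.03097 — 2 statements merged into one kernel-verified Lean document; each statement's English description precedes it below -/
import Mathlib

section
/- Let s ∈ Σⁿ. If the d₁-neighborhood N_n^{d₁}(s) = {t ∈ Σⁿ : edit(s,t) ≤ d₁} contains a subset X of size x whose elements have pairwise edit distance at least d₂, then for any (d₁,d₂)-sensitive bucketing function f we have |f(s)| ≥ x. -/
/-- Cost structure for the Levenshtein distance (as in the removed `Mathlib.Data.List.EditDistance`). -/
structure Levenshtein.Cost (α β δ : Type*) where
  delete : α → δ
  insert : β → δ
  substitute : α → β → δ

/-- The default cost: insertions and deletions cost 1, substitutions cost 0 or 1. -/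
def Levenshtein.defaultCost {α : Type*} [DecidableEq α] : Levenshtein.Cost α α ℕ where
  delete _ := 1
  insert _ := 1
  substitute a b := if a = b then 0 else 1

/-- Levenshtein distance, by its defining recursion (the removed Mathlib `levenshtein`). -/
def levenshtein {α β δ : Type*} [AddZeroClass δ] [Min δ] (C : Levenshtein.Cost α β δ) :
    List α → List β → δ
  | [], [] => 0
  | [], y :: ys => C.insert y + levenshtein C [] ys
  | x :: xs, [] => C.delete x + levenshtein C xs []
  | x :: xs, y :: ys =>
    min (C.delete x + levenshtein C xs (y :: ys))
      (min (C.insert y + levenshtein C (x :: xs) ys) (C.substitute x y + levenshtein C xs ys))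

/-- Edit (Levenshtein) distance between two length-`n` sequences over `α`. -/
def editDist {α : Type*} [DecidableEq α] {n : ℕ} (s t : Fin n → α) : ℕ :=
  levenshtein Levenshtein.defaultCost (List.ofFn s) (List.ofFn t)

/-- `f` is a `(d₁, d₂)`-sensitive bucketing function. -/
def IsSensitive {α B : Type*} [DecidableEq α] {n : ℕ} (d₁ d₂ : ℕ)
    (f : (Fin n → α) → Set B) : Prop :=
  (∀ s t : Fin n → α, editDist s t ≤ d₁ → (f s ∩ f t).Nonempty) ∧
  (∀ s t : Fin n → α, d₂ ≤ editDist s t → f s ∩ f t = ∅)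

theorem stmt1 {α B : Type*} [Fintype α] [DecidableEq α] (hα : 1 < Fintype.card α)
    {n d₁ d₂ : ℕ} (hd : d₁ < d₂) (s : Fin n → α) (X : Finset (Fin n → α))
    (hX : ∀ t ∈ X, editDist s t ≤ d₁)
    (hpair : ∀ t ∈ X, ∀ u ∈ X, t ≠ u → d₂ ≤ editDist t u)
    (f : (Fin n → α) → Set B) (hf : IsSensitive d₁ d₂ f) :
    ∃ Y : Finset B, ↑Y ⊆ f s ∧ X.card ≤ Y.card := by
  classical
  have hpick : ∀ t ∈ X, ∃ b, b ∈ f s ∧ b ∈ f t := by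
    intro t ht
    obtain ⟨b, hb⟩ := hf.1 s t (hX t ht)
    exact ⟨b, hb.1, hb.2⟩
  choose g hg1 hg2 using hpick
  refine ⟨X.attach.image (fun t => g t.1 t.2), ?_, ?_⟩
  · intro b hb
    simp only [Finset.coe_image, Set.mem_image, Finset.mem_coe, Finset.mem_attach] at hb
    obtain ⟨t, -, rfl⟩ := hb
    exact hg1 t.1 t.2
  · rw [← Finset.card_attach (s := X)]
    apply Finset.card_le_card_of_injOn (fun t => g t.1 t.2) (fun t _ => Finset.mem_image_of_mem _ (Finset.mem_attach _ _))
    intro t _ u _ h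
    by_contra hne
    have hne' : t.1 ≠ u.1 := fun e => hne (Subtype.ext e)
    have := hf.2 t.1 u.1 (hpair t.1 t.2 u.1 u.2 hne')
    have h' : g t.1 t.2 = g u.1 u.2 := h
    have : g t.1 t.2 ∈ f t.1 ∩ f u.1 := ⟨hg2 t.1 t.2, h' ▸ hg2 u.1 u.2⟩
    simp_all
end

section
/- If f : Σⁿ → P(B) is a (1,2)-sensitive bucketing function, then |f(s)| ≥ n for every sequence s ∈ Σⁿ. -/
section levlemmas

variable {α β δ : Type*} [AddZeroClass δ] [Min δ] (C : Levenshtein.Cost α β δ)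

@[simp] lemma levenshtein_nil_nil : levenshtein C [] [] = 0 := by simp only [levenshtein]

@[simp] lemma levenshtein_nil_cons (y : β) (ys : List β) :
    levenshtein C [] (y :: ys) = C.insert y + levenshtein C [] ys := by simp only [levenshtein]

@[simp] lemma levenshtein_cons_nil (x : α) (xs : List α) :
    levenshtein C (x :: xs) [] = C.delete x + levenshtein C xs [] := by simp only [levenshtein]

lemma levenshtein_cons_cons (x : α) (xs : List α) (y : β) (ys : List β) :
    levenshtein C (x :: xs) (y :: ys) =
      min (C.delete x + levenshtein C xs (y :: ys))
        (min (C.insert y + levenshtein C (x :: xs) ys) (C.substitute x y + levenshtein C xs ys)) := by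
  simp only [levenshtein]

end levlemmas

@[simp] lemma Levenshtein.defaultCost_delete {α : Type*} [DecidableEq α] (a : α) :
    (Levenshtein.defaultCost : Levenshtein.Cost α α ℕ).delete a = 1 := rfl

@[simp] lemma Levenshtein.defaultCost_insert {α : Type*} [DecidableEq α] (a : α) :
    (Levenshtein.defaultCost : Levenshtein.Cost α α ℕ).insert a = 1 := rfl

@[simp] lemma Levenshtein.defaultCost_substitute {α : Type*} [DecidableEq α] (a b : α) :
    (Levenshtein.defaultCost : Levenshtein.Cost α α ℕ).substitute a b = if a = b then 0 else 1 := rfl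

section aux

variable {α : Type*} [DecidableEq α]

lemma lev_eq_zero_iff {x y : List α} (h : levenshtein Levenshtein.defaultCost x y = 0) :
    x = y := by
  induction x generalizing y with
  | nil =>
    cases y with
    | nil => rfl
    | cons b ys => simp [levenshtein_nil_cons] at h
  | cons a xs ih =>
    cases y with
    | nil => simp [levenshtein_cons_nil] at h
    | cons b ys =>
      simp only [levenshtein_cons_cons, Nat.min_eq_zero_iff, Nat.add_eq_zero,
        Levenshtein.defaultCost_delete, Levenshtein.defaultCost_insert,
        Levenshtein.defaultCost_substitute] at h
      rcases h with ⟨h1, _⟩ | ⟨h1, _⟩ | ⟨h1, h2⟩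
      · omega
      · omega
      · have hab : a = b := by by_contra hab; simp [hab] at h1
        rw [hab, ih h2]

/-- mismatch count of two equal-length lists -/
def mismL (x y : List α) : ℕ := (x.zip y).countP (fun q => q.1 ≠ q.2)

lemma mismL_self (x : List α) : mismL x x = 0 := by
  induction x with
  | nil => simp [mismL]
  | cons a l ih =>
    simp only [mismL, List.zip_cons_cons, List.countP_cons] at *
    rw [ih]
    simp

lemma lev_le_mism : ∀ x y : List α, x.length = y.length →
    levenshtein Levenshtein.defaultCost x y ≤ mismL x y := by
  intro x
  induction x with
  | nil =>
    intro y hy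
    cases y with
    | nil => simp [mismL]
    | cons b ys => simp at hy
  | cons a xs ih =>
    intro y hy
    cases y with
    | nil => simp at hy
    | cons b ys =>
      simp only [List.length_cons, Nat.succ_inj] at hy
      have hih := ih ys hy
      have hstep : levenshtein Levenshtein.defaultCost (a :: xs) (b :: ys) ≤
          Levenshtein.defaultCost.substitute a b + levenshtein Levenshtein.defaultCost xs ys := by
        rw [levenshtein_cons_cons]
        exact le_trans (min_le_right _ _) (min_le_right _ _)
      refine le_trans hstep ?_
      simp only [Levenshtein.defaultCost_substitute, mismL, List.zip_cons_cons,
        List.countP_cons, ne_eq, decide_not] at *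
      by_cases hab : a = b <;> simp [hab] <;> omega

lemma mism_le_one_of_lev_le_one : ∀ x y : List α, x.length = y.length →
    levenshtein Levenshtein.defaultCost x y ≤ 1 → mismL x y ≤ 1 := by
  intro x
  induction x with
  | nil => intro y _ _; cases y <;> simp [mismL]
  | cons a xs ih =>
    intro y hy h
    cases y with
    | nil => simp at hy
    | cons b ys =>
      simp only [List.length_cons, Nat.succ_inj] at hy
      simp only [levenshtein_cons_cons, Levenshtein.defaultCost_delete,
        Levenshtein.defaultCost_insert, Levenshtein.defaultCost_substitute,
        min_le_iff] at h
      simp only [mismL, ne_eq, decide_not, List.zip_cons_cons, List.countP_cons]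
      rcases h with h | h | h
      · -- delete branch: lev xs (b::ys) = 0, length contradiction
        have h0 : levenshtein Levenshtein.defaultCost xs (b :: ys) = 0 := by omega
        have := lev_eq_zero_iff h0
        subst this
        simp at hy
      · have h0 : levenshtein Levenshtein.defaultCost (a :: xs) ys = 0 := by omega
        have := lev_eq_zero_iff h0
        rw [← this] at hy
        simp at hy
      · by_cases hab : a = b
        · rw [if_pos hab, zero_add] at h
          have hih := ih ys hy h
          simp only [mismL, ne_eq, decide_not] at hih ⊢
          simp only [List.zip_cons_cons, List.countP_cons, hab]
          simp
          omega
        · rw [if_neg hab] at h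
          have h0 : levenshtein Levenshtein.defaultCost xs ys = 0 := by omega
          have := lev_eq_zero_iff h0
          subst this
          have h00 : mismL xs xs = 0 := mismL_self xs
          simp only [mismL, ne_eq, decide_not] at h00 ⊢
          simp only [List.zip_cons_cons, List.countP_cons, h00]
          split <;> omega

lemma countP_ofFn {n : ℕ} (p : α → Bool) (g : Fin n → α) :
    (List.ofFn g).countP p = (Finset.univ.filter (fun k => p (g k))).card := by
  induction n with
  | zero => simp
  | succ n ih =>
    rw [List.ofFn_succ, List.countP_cons, ih (fun k => g k.succ)]
    rw [Finset.card_filter, Finset.card_filter, Fin.sum_univ_succ]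
    simp [add_comm]

end aux

theorem stmt3 {α B : Type*} [Fintype α] [DecidableEq α] (hα : 1 < Fintype.card α)
    {n : ℕ} (f : (Fin n → α) → Set B) (hf : IsSensitive 1 2 f) :
    ∀ s : Fin n → α, ∃ Y : Finset B, ↑Y ⊆ f s ∧ n ≤ Y.card := by
  classical
  intro s
  have ha : ∀ i : Fin n, ∃ b : α, b ≠ s i := fun i =>
    Fintype.exists_ne_of_one_lt_card hα (s i)
  choose a ha using ha
  set t : Fin n → (Fin n → α) := fun i => Function.update s i (a i) with ht
  -- mismatch set computation
  have hzip : ∀ u v : Fin n → α,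
      mismL (List.ofFn u) (List.ofFn v)
        = (Finset.univ.filter (fun k => u k ≠ v k)).card := by
    intro u v
    have : (List.ofFn u).zip (List.ofFn v) = List.ofFn (fun k => (u k, v k)) := by
      apply List.ext_getElem <;> simp
    rw [mismL, this, countP_ofFn]
    simp
  have h1 : ∀ i, editDist s (t i) ≤ 1 := by
    intro i
    refine le_trans (lev_le_mism _ _ (by simp)) ?_
    rw [hzip]
    refine le_trans (Finset.card_le_card (fun k hk => ?_)) (by simp : ({i} : Finset (Fin n)).card ≤ 1)
    simp only [Finset.mem_filter] at hk
    simp only [Finset.mem_singleton]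
    by_contra hki
    exact hk.2 (by simp [ht, Function.update_of_ne hki])
  have h2 : ∀ i j : Fin n, i ≠ j → 2 ≤ editDist (t i) (t j) := by
    intro i j hij
    by_contra h
    push_neg at h
    have hle : editDist (t i) (t j) ≤ 1 := by omega
    have := mism_le_one_of_lev_le_one _ _ (by simp) hle
    rw [hzip] at this
    have hsub : ({i, j} : Finset (Fin n)) ⊆
        Finset.univ.filter (fun k => t i k ≠ t j k) := by
      intro k hk
      simp only [Finset.mem_insert, Finset.mem_singleton] at hk
      simp only [Finset.mem_filter, Finset.mem_univ, true_and]
      rcases hk with rfl | rfl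
      · show Function.update s k (a k) k ≠ Function.update s j (a j) k
        rw [Function.update_self, Function.update_of_ne hij]
        exact ha k
      · show Function.update s i (a i) k ≠ Function.update s k (a k) k
        rw [Function.update_self, Function.update_of_ne (Ne.symm hij)]
        exact Ne.symm (ha k)
    have := le_trans (Finset.card_le_card hsub) this
    rw [Finset.card_pair hij] at this
    omega
  have hb : ∀ i, ∃ x, x ∈ f s ∩ f (t i) := fun i => hf.1 s (t i) (h1 i)
  choose b hb using hb
  have hinj : Function.Injective b := by
    intro i j hij
    by_contra hne
    have hemp := hf.2 (t i) (t j) (h2 i j hne)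
    have : b i ∈ f (t i) ∩ f (t j) := ⟨(hb i).2, hij ▸ (hb j).2⟩
    rw [hemp] at this
    exact this
  refine ⟨Finset.univ.image b, ?_, ?_⟩
  · intro x hx
    simp only [Finset.coe_image, Set.mem_image] at hx
    obtain ⟨i, _, rfl⟩ := hx
    exact (hb i).1
  · rw [Finset.card_image_of_injective _ hinj, Finset.card_univ, Fintype.card_fin]
end
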